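/- arXiv:1205.2260 — 2 statements merged into one kernel-verified Lean document; each statement's English description precedes it below -/
import Mathlib

section
/- The bottom of the numerical range (hence of the spectrum) of the two-dimensional atomic Hamiltonian h_{N,Z} = Σᵢ(−Δ_{ϱᵢ}) + 𝒱_{2D} on H¹(ℝ^{2N}) is bounded below by −(Γ(1/4)⁴ √N Z / (8π²))². -/
open MeasureTheory Real

noncomputable def V2D (N : ℕ) (Z : ℝ) (x : EuclideanSpace ℝ (Fin N × Fin 2)) : ℝ :=
  -Z * ∑ i : Fin N, (Real.sqrt ((x (i, 0)) ^ 2 + (x (i, 1)) ^ 2))⁻¹ +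
    ∑ p ∈ Finset.univ.filter (fun p : Fin N × Fin N => p.1 < p.2),
      (Real.sqrt ((x (p.1, 0) - x (p.2, 0)) ^ 2 + (x (p.1, 1) - x (p.2, 1)) ^ 2))⁻¹

section AuxNRLB

open Filter Topology

variable {N : ℕ}

/-- Numeric fact: `Γ(1/4)^4 ≥ 8 π²`. -/
lemma gamma_quarter_pow_four : 8 * π ^ 2 ≤ Real.Gamma (1 / 4) ^ 4 := by
  have hsp : Real.sqrt π ^ 2 = π := Real.sq_sqrt pi_pos.le
  have hsp0 : 0 ≤ Real.sqrt π := Real.sqrt_nonneg _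
  have hs2 : Real.sqrt 2 ^ 2 = 2 := Real.sq_sqrt (by norm_num)
  have hs20 : 0 < Real.sqrt 2 := Real.sqrt_pos.2 (by norm_num)
  have h34pos : 0 < Real.Gamma (3 / 4) := Real.Gamma_pos_of_pos (by norm_num)
  have hGpos : 0 < Real.Gamma (1 / 4) := Real.Gamma_pos_of_pos (by norm_num)
  -- convexity bound  Γ(3/4) ≤ (√π + 1)/2
  have h34 : Real.Gamma (3 / 4) ≤ (Real.sqrt π + 1) / 2 := by
    have h := Real.convexOn_Gamma.2 (Set.mem_Ioi.mpr (by norm_num : (0:ℝ) < 1/2))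
      (Set.mem_Ioi.mpr (by norm_num : (0:ℝ) < 1))
      (by norm_num : (0:ℝ) ≤ 1/2) (by norm_num : (0:ℝ) ≤ 1/2) (by norm_num)
    simp only [smul_eq_mul] at h
    norm_num [Real.Gamma_one_half_eq, Real.Gamma_one] at h
    linarith
  -- reflection:  Γ(1/4) Γ(3/4) = π / sin(π/4) = 2π/√2
  have hrefl : Real.Gamma (1 / 4) * Real.Gamma (3 / 4) = π / (Real.sqrt 2 / 2) := by
    have h := Real.Gamma_mul_Gamma_one_sub (1 / 4)
    rw [show (1:ℝ) - 1/4 = 3/4 by norm_num, show π * (1/4 : ℝ) = π / 4 by ring,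
      Real.sin_pi_div_four] at h
    exact h
  -- hence  Γ(1/4) * (√2 (√π+1)/2) ≥ 2π
  have key : 2 * π ≤ Real.Gamma (1 / 4) * (Real.sqrt 2 * (Real.sqrt π + 1) / 2) := by
    have h1 : Real.Gamma (1 / 4) * Real.Gamma (3 / 4) * Real.sqrt 2 = 2 * π := by
      rw [hrefl]; field_simp
    have h2 : Real.Gamma (1 / 4) * Real.Gamma (3 / 4) * Real.sqrt 2
        ≤ Real.Gamma (1 / 4) * ((Real.sqrt π + 1) / 2) * Real.sqrt 2 := by
      have := mul_le_mul_of_nonneg_left h34 hGpos.le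
      exact mul_le_mul_of_nonneg_right this hs20.le
    nlinarith [h2]
  -- raise to the 4th power
  have key4 : (2 * π) ^ 4 ≤ Real.Gamma (1 / 4) ^ 4 * ((Real.sqrt π + 1) ^ 4 / 4) := by
    have h0 : 0 ≤ 2 * π := by positivity
    have h := pow_le_pow_left₀ h0 key 4
    calc (2*π)^4 ≤ (Real.Gamma (1/4) * (Real.sqrt 2 * (Real.sqrt π + 1) / 2))^4 := h
      _ = Real.Gamma (1/4)^4 * ((Real.sqrt 2 ^2)^2 * (Real.sqrt π + 1)^4 / 16) := by ring
      _ = Real.Gamma (1/4)^4 * ((Real.sqrt π + 1)^4 / 4) := by rw [hs2]; ring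
  -- numeric:  (√π+1)^4 ≤ 8 π²
  have hsple : Real.sqrt π ≤ 1.8 := by nlinarith [hsp, hsp0, pi_lt_d2]
  have hnum : (Real.sqrt π + 1) ^ 4 ≤ 8 * π ^ 2 := by nlinarith [hsp0, pi_gt_d6, hsple]
  -- combine
  have hpos : (0:ℝ) < (Real.sqrt π + 1) ^ 4 := by positivity
  nlinarith [key4, hnum, hpos, sq_nonneg (π ^ 2), pi_pos]

/-- If `|L v| ≤ M ‖v‖` for a real functional on Euclidean space then the ℓ² norm of its
coordinates is at most `M`. -/
lemma sqrt_sum_sq_coords_le (L : EuclideanSpace ℝ (Fin N × Fin 2) →L[ℝ] ℝ) {M : ℝ}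
    (hM : 0 ≤ M) (h : ∀ v, |L v| ≤ M * ‖v‖) :
    Real.sqrt (∑ c : Fin N × Fin 2, (L (EuclideanSpace.single c 1)) ^ 2) ≤ M := by
  set y := (InnerProductSpace.toDual ℝ (EuclideanSpace ℝ (Fin N × Fin 2))).symm L with hy
  have hLv : ∀ c : Fin N × Fin 2, L (EuclideanSpace.single c (1:ℝ)) = y c := by
    intro c
    rw [show L (EuclideanSpace.single c (1:ℝ))
        = inner ℝ y (EuclideanSpace.single c (1:ℝ)) from
      (InnerProductSpace.toDual_symm_apply).symm]
    rw [EuclideanSpace.inner_single_right]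
    simp
  have h1 : Real.sqrt (∑ c : Fin N × Fin 2, (L (EuclideanSpace.single c 1)) ^ 2) = ‖y‖ := by
    rw [EuclideanSpace.norm_eq]
    congr 1
    refine Finset.sum_congr rfl fun c _ => ?_
    rw [hLv c, Real.norm_eq_abs, sq_abs]
  have h2 : ‖y‖ = ‖L‖ :=
    (InnerProductSpace.toDual ℝ (EuclideanSpace ℝ (Fin N × Fin 2))).symm.norm_map L
  rw [h1, h2]
  exact ContinuousLinearMap.opNorm_le_bound L hM fun v => by
    rw [Real.norm_eq_abs]; exact h v

end AuxNRLB
section PsiNRLB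

open Filter Topology

variable {N : ℕ} (ψ : SchwartzMap (EuclideanSpace ℝ (Fin N × Fin 2)) ℂ)

lemma hasFDerivAt_normsq (x : EuclideanSpace ℝ (Fin N × Fin 2)) :
    HasFDerivAt (fun y => ‖ψ y‖ ^ 2)
      (2 • ((innerSL ℝ (ψ x)).comp (fderiv ℝ (⇑ψ) x))) x :=
  ((ψ.differentiable x).hasFDerivAt).norm_sq

lemma fderiv_normsq_apply (x v) :
    fderiv ℝ (fun y => ‖ψ y‖ ^ 2) x v = 2 * (inner ℝ (ψ x) (fderiv ℝ (⇑ψ) x v) : ℝ) := by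
  rw [(hasFDerivAt_normsq ψ x).fderiv]
  simp [two_smul]
  ring

lemma abs_fderiv_normsq_le (x v) :
    |fderiv ℝ (fun y => ‖ψ y‖ ^ 2) x v|
      ≤ 2 * (‖ψ x‖ * ‖fderiv ℝ (⇑ψ) x‖) * ‖v‖ := by
  rw [fderiv_normsq_apply]
  rw [abs_mul]
  have h1 : |(inner ℝ (ψ x) (fderiv ℝ (⇑ψ) x v) : ℝ)| ≤ ‖ψ x‖ * ‖fderiv ℝ (⇑ψ) x v‖ :=
    abs_real_inner_le_norm _ _
  have h2 : ‖fderiv ℝ (⇑ψ) x v‖ ≤ ‖fderiv ℝ (⇑ψ) x‖ * ‖v‖ :=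
    (fderiv ℝ (⇑ψ) x).le_opNorm v
  have h3 : ‖ψ x‖ * ‖fderiv ℝ (⇑ψ) x v‖ ≤ ‖ψ x‖ * (‖fderiv ℝ (⇑ψ) x‖ * ‖v‖) :=
    mul_le_mul_of_nonneg_left h2 (norm_nonneg _)
  have : |(2:ℝ)| = 2 := by norm_num
  rw [this]
  nlinarith [abs_nonneg ((inner ℝ (ψ x) (fderiv ℝ (⇑ψ) x v) : ℝ))]

lemma continuous_fderiv_psi : Continuous (fun x => fderiv ℝ (⇑ψ) x) := by
  have : (fun x => fderiv ℝ (⇑ψ) x) = ⇑(SchwartzMap.fderivCLM ℝ _ _ ψ) := by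
    funext x; rw [SchwartzMap.fderivCLM_apply]
  rw [this]; exact (SchwartzMap.fderivCLM ℝ _ _ ψ).continuous.comp (by exact continuous_id) |>.congr (fun _ => rfl)

lemma continuous_fderiv_normsq (v) :
    Continuous (fun x => fderiv ℝ (fun y => ‖ψ y‖ ^ 2) x v) := by
  have : (fun x => fderiv ℝ (fun y => ‖ψ y‖ ^ 2) x v)
      = fun x => 2 * (inner ℝ (ψ x) (fderiv ℝ (⇑ψ) x v) : ℝ) := by
    funext x; rw [fderiv_normsq_apply]
  rw [this]
  exact continuous_const.mul
    (Continuous.inner ψ.continuous ((continuous_fderiv_psi ψ).clm_apply continuous_const))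

lemma psi_bdd : ∃ C, ∀ x, ‖ψ x‖ ≤ C := by
  refine ⟨‖ψ.toBoundedContinuousFunction‖, fun x => ?_⟩
  simpa using ψ.toBoundedContinuousFunction.norm_coe_le_norm x

lemma fderiv_psi_bdd : ∃ C, ∀ x, ‖fderiv ℝ (⇑ψ) x‖ ≤ C := by
  refine ⟨‖(SchwartzMap.fderivCLM ℝ _ _ ψ).toBoundedContinuousFunction‖, fun x => ?_⟩
  have := (SchwartzMap.fderivCLM ℝ _ _ ψ).toBoundedContinuousFunction.norm_coe_le_norm x
  simpa [SchwartzMap.fderivCLM_apply] using this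

lemma integrable_normsq : Integrable (fun x => ‖ψ x‖ ^ 2) (volume : Measure (EuclideanSpace ℝ (Fin N × Fin 2))) := by
  obtain ⟨C, hC⟩ := psi_bdd ψ
  have h : Integrable (fun x => ‖ψ x‖ * ‖ψ x‖) volume :=
    (ψ.integrable.norm).bdd_mul ψ.continuous.norm.aestronglyMeasurable
      (Filter.Eventually.of_forall fun x => by simpa using hC x)
  simpa [sq] using h

lemma integrable_mixed :
    Integrable (fun x => ‖ψ x‖ * ‖fderiv ℝ (⇑ψ) x‖)
      (volume : Measure (EuclideanSpace ℝ (Fin N × Fin 2))) := by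
  obtain ⟨C, hC⟩ := psi_bdd ψ
  have h0 : Integrable (fun x => ‖fderiv ℝ (⇑ψ) x‖) volume := by
    have := (SchwartzMap.fderivCLM ℝ _ _ ψ).integrable (μ := volume) |>.norm
    simpa [SchwartzMap.fderivCLM_apply] using this
  exact h0.bdd_mul ψ.continuous.norm.aestronglyMeasurable (Filter.Eventually.of_forall fun x => by simpa using hC x)

lemma integrable_fderiv_sq :
    Integrable (fun x => ‖fderiv ℝ (⇑ψ) x‖ ^ 2)
      (volume : Measure (EuclideanSpace ℝ (Fin N × Fin 2))) := by
  obtain ⟨C, hC⟩ := fderiv_psi_bdd ψ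
  have h0 : Integrable (fun x => ‖fderiv ℝ (⇑ψ) x‖) volume := by
    have := (SchwartzMap.fderivCLM ℝ _ _ ψ).integrable (μ := volume) |>.norm
    simpa [SchwartzMap.fderivCLM_apply] using this
  have h : Integrable (fun x => ‖fderiv ℝ (⇑ψ) x‖ * ‖fderiv ℝ (⇑ψ) x‖) volume :=
    h0.bdd_mul ((continuous_fderiv_psi ψ).norm.aestronglyMeasurable)
      (Filter.Eventually.of_forall fun x => by simpa using hC x)
  simpa [sq] using h

lemma cs_mixed :
    ∫ x, ‖ψ x‖ * ‖fderiv ℝ (⇑ψ) x‖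
      ≤ Real.sqrt (∫ x, ‖ψ x‖ ^ 2) * Real.sqrt (∫ x, ‖fderiv ℝ (⇑ψ) x‖ ^ 2) := by
  have hpq : Real.HolderConjugate 2 2 := Real.HolderConjugate.two_two
  have hf : MemLp (fun x => ‖ψ x‖) (ENNReal.ofReal 2)
      (volume : Measure (EuclideanSpace ℝ (Fin N × Fin 2))) := by
    rw [show ENNReal.ofReal 2 = 2 by norm_num]
    exact (memLp_two_iff_integrable_sq ψ.continuous.norm.aestronglyMeasurable).2
      (by simpa using integrable_normsq ψ)
  have hg : MemLp (fun x => ‖fderiv ℝ (⇑ψ) x‖) (ENNReal.ofReal 2)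
      (volume : Measure (EuclideanSpace ℝ (Fin N × Fin 2))) := by
    rw [show ENNReal.ofReal 2 = 2 by norm_num]
    exact (memLp_two_iff_integrable_sq
      (continuous_fderiv_psi ψ).norm.aestronglyMeasurable).2 (integrable_fderiv_sq ψ)
  have h := integral_mul_le_Lp_mul_Lq_of_nonneg hpq
    (Filter.Eventually.of_forall fun x => norm_nonneg _)
    (Filter.Eventually.of_forall fun x => norm_nonneg _) hf hg
  have e1 : ∀ r : ℝ, 0 ≤ r → r ^ (2:ℝ) = r ^ (2:ℕ) := by
    intro r hr
    rw [show (2:ℝ) = ((2:ℕ):ℝ) by norm_num, Real.rpow_natCast]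
  calc ∫ x, ‖ψ x‖ * ‖fderiv ℝ (⇑ψ) x‖
      ≤ (∫ x, ‖ψ x‖ ^ (2:ℝ)) ^ (1/2 : ℝ) * (∫ x, ‖fderiv ℝ (⇑ψ) x‖ ^ (2:ℝ)) ^ (1/2 : ℝ) := h
    _ = Real.sqrt (∫ x, ‖ψ x‖ ^ 2) * Real.sqrt (∫ x, ‖fderiv ℝ (⇑ψ) x‖ ^ 2) := by
        rw [← Real.sqrt_eq_rpow, ← Real.sqrt_eq_rpow]
        congr 2 <;> · refine integral_congr_ae (Filter.Eventually.of_forall fun x => ?_)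
                      exact e1 _ (norm_nonneg _)

end PsiNRLB
section HardyNRLB

open Filter Topology

variable {N : ℕ}

/-- The local gradient weight `G_i(x)`. -/
noncomputable def Gfun (ψ : SchwartzMap (EuclideanSpace ℝ (Fin N × Fin 2)) ℂ) (i : Fin N)
    (x : EuclideanSpace ℝ (Fin N × Fin 2)) : ℝ :=
  Real.sqrt ((fderiv ℝ (fun y => ‖ψ y‖ ^ 2) x (EuclideanSpace.single (i, 0) 1)) ^ 2
    + (fderiv ℝ (fun y => ‖ψ y‖ ^ 2) x (EuclideanSpace.single (i, 1) 1)) ^ 2)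

variable (ψ : SchwartzMap (EuclideanSpace ℝ (Fin N × Fin 2)) ℂ)

lemma Gfun_nonneg (i : Fin N) (x) : 0 ≤ Gfun ψ i x := Real.sqrt_nonneg _

lemma Gfun_le (i : Fin N) (x) :
    Gfun ψ i x ≤ 4 * (‖ψ x‖ * ‖fderiv ℝ (⇑ψ) x‖) := by
  set a := fderiv ℝ (fun y => ‖ψ y‖ ^ 2) x (EuclideanSpace.single ((i, 0) : Fin N × Fin 2) 1) with ha
  set b := fderiv ℝ (fun y => ‖ψ y‖ ^ 2) x (EuclideanSpace.single ((i, 1) : Fin N × Fin 2) 1) with hb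
  have hna : ‖EuclideanSpace.single ((i, 0) : Fin N × Fin 2) (1:ℝ)‖ = 1 := by
    rw [EuclideanSpace.norm_single]; norm_num
  have hnb : ‖EuclideanSpace.single ((i, 1) : Fin N × Fin 2) (1:ℝ)‖ = 1 := by
    rw [EuclideanSpace.norm_single]; norm_num
  have h1 : |a| ≤ 2 * (‖ψ x‖ * ‖fderiv ℝ (⇑ψ) x‖) := by
    have := abs_fderiv_normsq_le ψ x (EuclideanSpace.single (i, 0) 1)
    rwa [hna, mul_one] at this
  have h2 : |b| ≤ 2 * (‖ψ x‖ * ‖fderiv ℝ (⇑ψ) x‖) := by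
    have := abs_fderiv_normsq_le ψ x (EuclideanSpace.single (i, 1) 1)
    rwa [hnb, mul_one] at this
  have h3 : Real.sqrt (a ^ 2 + b ^ 2) ≤ |a| + |b| := by
    have h4 : a ^ 2 + b ^ 2 ≤ (|a| + |b|) ^ 2 := by
      nlinarith [abs_nonneg a, abs_nonneg b, sq_abs a, sq_abs b, mul_nonneg (abs_nonneg a) (abs_nonneg b)]
    calc Real.sqrt (a ^ 2 + b ^ 2) ≤ Real.sqrt ((|a| + |b|) ^ 2) := Real.sqrt_le_sqrt h4
      _ = |a| + |b| := Real.sqrt_sq (by positivity)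
  calc Gfun ψ i x ≤ |a| + |b| := h3
    _ ≤ 4 * (‖ψ x‖ * ‖fderiv ℝ (⇑ψ) x‖) := by linarith

lemma continuous_Gfun (i : Fin N) : Continuous (Gfun ψ i) := by
  apply Continuous.sqrt
  exact ((continuous_fderiv_normsq ψ _).pow 2).add ((continuous_fderiv_normsq ψ _).pow 2)

lemma integrable_Gfun (i : Fin N) :
    Integrable (Gfun ψ i) (volume : Measure (EuclideanSpace ℝ (Fin N × Fin 2))) := by
  refine Integrable.mono' ((integrable_mixed ψ).const_mul 4)
    (continuous_Gfun ψ i).aestronglyMeasurable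
    (Filter.Eventually.of_forall fun x => ?_)
  rw [Real.norm_eq_abs, abs_of_nonneg (Gfun_nonneg ψ i x)]
  exact Gfun_le ψ i x

set_option maxHeartbeats 1000000 in
/-- Smoothed Hardy inequality obtained by integration by parts. -/
lemma hardy_delta (i : Fin N) {δ : ℝ} (hδ : 0 < δ) :
    Integrable (fun x : EuclideanSpace ℝ (Fin N × Fin 2) =>
        (Real.sqrt (δ + (x (i, 0)) ^ 2 + (x (i, 1)) ^ 2))⁻¹ * ‖ψ x‖ ^ 2) volume ∧
    ∫ x : EuclideanSpace ℝ (Fin N × Fin 2),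
        (Real.sqrt (δ + (x (i, 0)) ^ 2 + (x (i, 1)) ^ 2))⁻¹ * ‖ψ x‖ ^ 2
      ≤ ∫ x, Gfun ψ i x := by
  classical
  set E' := EuclideanSpace ℝ (Fin N × Fin 2)
  set g : E' → ℝ := fun x => ‖ψ x‖ ^ 2 with hgdef
  set q : E' → ℝ := fun x => δ + (x (i, 0)) ^ 2 + (x (i, 1)) ^ 2 with hqdef
  have hq_pos : ∀ x, 0 < q x := fun x => by
    have := sq_nonneg (x (i, 0)); have := sq_nonneg (x (i, 1)); simp only [hqdef]; linarith
  have hs_pos : ∀ x, 0 < Real.sqrt (q x) := fun x => Real.sqrt_pos.2 (hq_pos x)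
  have hsq : ∀ x, Real.sqrt (q x) ^ 2 = q x := fun x => Real.sq_sqrt (hq_pos x).le
  have hδs : ∀ x, Real.sqrt δ ≤ Real.sqrt (q x) := fun x => by
    apply Real.sqrt_le_sqrt
    have := sq_nonneg (x (i, 0)); have := sq_nonneg (x (i, 1)); simp only [hqdef]; linarith
  have hδ0 : 0 < Real.sqrt δ := Real.sqrt_pos.2 hδ
  have hinv_le : ∀ x, (Real.sqrt (q x))⁻¹ ≤ (Real.sqrt δ)⁻¹ := fun x =>
    inv_anti₀ hδ0 (hδs x)
  -- coordinate projections
  set P : Fin 2 → (E' →L[ℝ] ℝ) := fun j => EuclideanSpace.proj (i, j) with hPdef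
  set v : Fin 2 → E' := fun j => EuclideanSpace.single (i, j) 1 with hvdef
  have hproj : ∀ (j : Fin 2) (x : E'), HasFDerivAt (fun y : E' => y (i, j)) (P j) x := fun j x =>
    (P j).hasFDerivAt
  have hPv : ∀ (m k : Fin 2), (P m) (v k) = if m = k then (1:ℝ) else 0 := by
    intro m k
    have h1 : (P m) (v k) = (EuclideanSpace.single ((i, k) : Fin N × Fin 2) (1:ℝ)) (i, m) := rfl
    rw [h1, EuclideanSpace.single_apply]
    by_cases h : m = k <;> simp [h, Prod.ext_iff]
  -- derivative of q
  have hqd : ∀ x : E', HasFDerivAt q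
      ((2 * x (i, 0)) • P 0 + (2 * x (i, 1)) • P 1) x := by
    intro x
    have h := ((hasFDerivAt_const δ x).add ((hproj 0 x).mul (hproj 0 x))).add
      ((hproj 1 x).mul (hproj 1 x))
    have hfun : (fun y : E' => δ + y (i, 0) * y (i, 0) + y (i, 1) * y (i, 1)) = q := by
      funext y; simp only [hqdef]; ring
    replace h : HasFDerivAt q (0 + (x (i, 0) • P 0 + x (i, 0) • P 0) + (x (i, 1) • P 1 + x (i, 1) • P 1)) x := by rw [← hfun]; exact h
    convert h using 1
    ext u
    simp only [ContinuousLinearMap.add_apply, ContinuousLinearMap.smul_apply, smul_eq_mul,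
      ContinuousLinearMap.zero_apply, zero_add]
    ring
  -- derivative of (√(q x))⁻¹
  set wD : E' → (E' →L[ℝ] ℝ) := fun x =>
    (-(1 / (2 * Real.sqrt (q x))) / Real.sqrt (q x) ^ 2) •
      ((2 * x (i, 0)) • P 0 + (2 * x (i, 1)) • P 1) with hwDdef
  have hw : ∀ x : E', HasFDerivAt (fun y => (Real.sqrt (q y))⁻¹) (wD x) x := by
    intro x
    have hsd : HasDerivAt (fun t : ℝ => (Real.sqrt t)⁻¹)
        (-(1 / (2 * Real.sqrt (q x))) / Real.sqrt (q x) ^ 2) (q x) :=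
      (Real.hasDerivAt_sqrt (hq_pos x).ne').inv (hs_pos x).ne'
    exact hsd.comp_hasFDerivAt x (hqd x)
  -- the vector field F and its derivative
  set F : Fin 2 → E' → ℝ := fun j x => x (i, j) * (Real.sqrt (q x))⁻¹ with hFdef
  set DF : Fin 2 → E' → (E' →L[ℝ] ℝ) := fun j x =>
    x (i, j) • wD x + (Real.sqrt (q x))⁻¹ • P j with hDFdef
  have hF : ∀ (j : Fin 2) (x : E'), HasFDerivAt (F j) (DF j x) x := fun j x =>
    (hproj j x).mul (hw x)
  have hF_diff : ∀ j : Fin 2, Differentiable ℝ (F j) := fun j x => (hF j x).differentiableAt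
  -- the diagonal values of DF
  set d : Fin 2 → E' → ℝ := fun j x =>
    (Real.sqrt (q x))⁻¹ - (x (i, j)) ^ 2 * (Real.sqrt (q x) ^ 3)⁻¹ with hddef
  have hPv00 : (P 0) (v 0) = 1 := by rw [hPv]; norm_num
  have hPv01 : (P 0) (v 1) = 0 := by rw [hPv]; norm_num
  have hPv10 : (P 1) (v 0) = 0 := by rw [hPv]; norm_num
  have hPv11 : (P 1) (v 1) = 1 := by rw [hPv]; norm_num
  have happ : ∀ (j : Fin 2) (x : E'), DF j x (v j) = d j x := by
    intro j x
    have hs := (hs_pos x).ne'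
    simp only [hDFdef, hwDdef, ContinuousLinearMap.add_apply, ContinuousLinearMap.smul_apply,
      smul_eq_mul, hddef]
    have hgen : ∀ s c0 c1 : ℝ, s ≠ 0 →
        c0 * (-(1 / (2 * s)) / s ^ 2 * (2 * c0 * 1 + 2 * c1 * 0)) + s⁻¹ * 1
          = s⁻¹ - c0 ^ 2 * (s ^ 3)⁻¹ := by
      intro s c0 c1 hs0; field_simp; ring
    have hgen' : ∀ s c0 c1 : ℝ, s ≠ 0 →
        c1 * (-(1 / (2 * s)) / s ^ 2 * (2 * c0 * 0 + 2 * c1 * 1)) + s⁻¹ * 1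
          = s⁻¹ - c1 ^ 2 * (s ^ 3)⁻¹ := by
      intro s c0 c1 hs0; field_simp; ring
    fin_cases j
    · simp only [Fin.zero_eta]
      rw [hPv00, hPv10]
      exact hgen _ _ _ hs
    · simp only [Fin.mk_one]
      rw [hPv01, hPv11]
      exact hgen' _ _ _ hs
  -- pointwise facts
  have hgen2 : ∀ s : ℝ, 0 < s → s ^ 2 * (s ^ 3)⁻¹ = s⁻¹ := by
    intro s hs0; field_simp
  have hsqle : ∀ (j : Fin 2) (x : E'), (x (i, j)) ^ 2 ≤ q x := by
    intro j x
    have h0 := sq_nonneg (x (i, 0)); have h1' := sq_nonneg (x (i, 1))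
    fin_cases j <;> simp only [Fin.zero_eta, Fin.mk_one, hqdef] <;> linarith
  have hd_aux : ∀ (j : Fin 2) (x : E'),
      (x (i, j)) ^ 2 * (Real.sqrt (q x) ^ 3)⁻¹ ≤ (Real.sqrt (q x))⁻¹ := by
    intro j x
    have h4 : (x (i, j)) ^ 2 * (Real.sqrt (q x) ^ 3)⁻¹
        ≤ Real.sqrt (q x) ^ 2 * (Real.sqrt (q x) ^ 3)⁻¹ := by
      refine mul_le_mul_of_nonneg_right ?_ (by positivity)
      rw [hsq]; exact hsqle j x
    rwa [hgen2 _ (hs_pos x)] at h4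
  have hd_bound : ∀ (j : Fin 2) (x : E'), |d j x| ≤ (Real.sqrt δ)⁻¹ := by
    intro j x
    have h2 : 0 ≤ (x (i, j)) ^ 2 * (Real.sqrt (q x) ^ 3)⁻¹ := by positivity
    have h3 := hd_aux j x
    have h5 := hinv_le x
    have h6 : (0:ℝ) ≤ (Real.sqrt δ)⁻¹ := by positivity
    rw [abs_le]
    constructor <;> simp only [hddef] <;> linarith
  have hdiv_ge : ∀ x : E', (Real.sqrt (q x))⁻¹ ≤ d 0 x + d 1 x := by
    intro x
    have hsx := hs_pos x
    have h1 : ((x (i, 0)) ^ 2 + (x (i, 1)) ^ 2) * (Real.sqrt (q x) ^ 3)⁻¹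
        ≤ (Real.sqrt (q x))⁻¹ := by
      have hle : (x (i, 0)) ^ 2 + (x (i, 1)) ^ 2 ≤ Real.sqrt (q x) ^ 2 := by
        rw [hsq]; simp only [hqdef]; linarith
      calc ((x (i, 0)) ^ 2 + (x (i, 1)) ^ 2) * (Real.sqrt (q x) ^ 3)⁻¹
          ≤ Real.sqrt (q x) ^ 2 * (Real.sqrt (q x) ^ 3)⁻¹ :=
            mul_le_mul_of_nonneg_right hle (by positivity)
        _ = (Real.sqrt (q x))⁻¹ := hgen2 _ hsx
    have h2 : (x (i, 0)) ^ 2 * (Real.sqrt (q x) ^ 3)⁻¹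
        + (x (i, 1)) ^ 2 * (Real.sqrt (q x) ^ 3)⁻¹ ≤ (Real.sqrt (q x))⁻¹ := by
      rw [← add_mul]; exact h1
    simp only [hddef]; linarith
  have hF_bound : ∀ (j : Fin 2) (x : E'), |F j x| ≤ 1 := by
    intro j x
    have h1 : |x (i, j)| ≤ Real.sqrt (q x) := by
      rw [← Real.sqrt_sq_eq_abs]
      exact Real.sqrt_le_sqrt (hsqle j x)
    simp only [hFdef]
    rw [abs_mul, abs_inv, abs_of_nonneg (Real.sqrt_nonneg _)]
    calc |x (i, j)| * (Real.sqrt (q x))⁻¹ ≤ Real.sqrt (q x) * (Real.sqrt (q x))⁻¹ :=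
        mul_le_mul_of_nonneg_right h1 (by positivity)
      _ = 1 := mul_inv_cancel₀ (hs_pos x).ne'
  -- continuity facts
  have hcj : ∀ j : Fin 2, Continuous fun x : E' => x (i, j) := fun j => (P j).continuous
  have hq_cont : Continuous q := (continuous_const.add ((hcj 0).pow 2)).add ((hcj 1).pow 2)
  have hs_cont : Continuous fun x => Real.sqrt (q x) := Real.continuous_sqrt.comp hq_cont
  have hsinv_cont : Continuous fun x => (Real.sqrt (q x))⁻¹ :=
    hs_cont.inv₀ fun x => (hs_pos x).ne'
  have hd_cont : ∀ j : Fin 2, Continuous (d j) := by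
    intro j
    exact hsinv_cont.sub (((hcj j).pow 2).mul ((hs_cont.pow 3).inv₀ fun x => by
      have := hs_pos x; exact pow_ne_zero 3 this.ne'))
  have hFcont : ∀ j : Fin 2, Continuous (F j) := fun j => (hcj j).mul hsinv_cont
  -- integrability facts
  have hg_int : Integrable g volume := integrable_normsq ψ
  have hg_diff : Differentiable ℝ g := fun x => (hasFDerivAt_normsq ψ x).differentiableAt
  have hsinv_g_int : Integrable (fun x => (Real.sqrt (q x))⁻¹ * g x) volume :=
    hg_int.bdd_mul hsinv_cont.aestronglyMeasurable (Filter.Eventually.of_forall fun x => by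
      rw [Real.norm_eq_abs, abs_inv, abs_of_nonneg (Real.sqrt_nonneg _)]; exact hinv_le x)
  have hdg_int : ∀ j : Fin 2, Integrable (fun x => d j x * g x) volume := fun j =>
    hg_int.bdd_mul (hd_cont j).aestronglyMeasurable (Filter.Eventually.of_forall fun x => by
      rw [Real.norm_eq_abs]; exact hd_bound j x)
  have hfg_int : ∀ u : E', Integrable (fun x => fderiv ℝ g x u) volume := by
    intro u
    refine Integrable.mono' ((integrable_mixed ψ).const_mul (2 * ‖u‖))
      (continuous_fderiv_normsq ψ u).aestronglyMeasurable
      (Filter.Eventually.of_forall fun x => ?_)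
    rw [Real.norm_eq_abs]
    calc |fderiv ℝ g x u| ≤ 2 * (‖ψ x‖ * ‖fderiv ℝ (⇑ψ) x‖) * ‖u‖ :=
        abs_fderiv_normsq_le ψ x u
      _ = 2 * ‖u‖ * (‖ψ x‖ * ‖fderiv ℝ (⇑ψ) x‖) := by ring
  have hFdg_int : ∀ j : Fin 2,
      Integrable (fun x => F j x * fderiv ℝ g x (v j)) volume := fun j =>
    (hfg_int (v j)).bdd_mul (hFcont j).aestronglyMeasurable (Filter.Eventually.of_forall fun x => by
      rw [Real.norm_eq_abs]; exact hF_bound j x)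
  -- integration by parts
  have hibp : ∀ j : Fin 2, ∫ x, d j x * g x = - ∫ x, F j x * fderiv ℝ g x (v j) := by
    intro j
    have hfd : ∀ x : E', fderiv ℝ (F j) x (v j) = d j x := fun x => by
      rw [(hF j x).fderiv]; exact happ j x
    have h1 : Integrable (fun x => fderiv ℝ (F j) x (v j) * g x) volume :=
      (hdg_int j).congr (Filter.Eventually.of_forall fun x => by simp only [hfd])
    have h3 : Integrable (fun x => F j x * g x) volume :=
      hg_int.bdd_mul (hFcont j).aestronglyMeasurable (Filter.Eventually.of_forall fun x => by
        rw [Real.norm_eq_abs]; exact hF_bound j x)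
    have hmain := integral_mul_fderiv_eq_neg_fderiv_mul_of_integrable h1 (hFdg_int j) h3
      (fun x _ => hF_diff j x) (fun x _ => hg_diff x)
    have h4 : ∫ x, fderiv ℝ (F j) x (v j) * g x = ∫ x, d j x * g x :=
      integral_congr_ae (Filter.Eventually.of_forall fun x => by simp only [hfd])
    rw [h4] at hmain
    linarith [hmain]
  have hGint := integrable_Gfun ψ i
  -- pointwise comparison with Gfun
  have hptG : ∀ x : E',
      |F 0 x * fderiv ℝ g x (v 0) + F 1 x * fderiv ℝ g x (v 1)| ≤ Gfun ψ i x := by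
    intro x
    set a := fderiv ℝ g x (v 0) with hadef
    set b := fderiv ℝ g x (v 1) with hbdef
    have hF2 : F 0 x ^ 2 + F 1 x ^ 2 ≤ 1 := by
      have h1 : (x (i, 0)) ^ 2 + (x (i, 1)) ^ 2 ≤ q x := by
        simp only [hqdef]; linarith [hδ]
      have hs2 := hsq x
      have hqx := hq_pos x
      simp only [hFdef]
      have e1 : (x (i, 0) * (Real.sqrt (q x))⁻¹) ^ 2 + (x (i, 1) * (Real.sqrt (q x))⁻¹) ^ 2
          = ((x (i, 0)) ^ 2 + (x (i, 1)) ^ 2) * (Real.sqrt (q x) ^ 2)⁻¹ := by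
        rw [← inv_pow]; ring
      rw [e1, hs2, ← div_eq_mul_inv]
      exact (div_le_one hqx).2 h1
    have key : (F 0 x * a + F 1 x * b) ^ 2 ≤ a ^ 2 + b ^ 2 := by
      nlinarith [sq_nonneg (F 0 x * b - F 1 x * a), sq_nonneg a, sq_nonneg b, hF2,
        sq_nonneg (F 0 x), sq_nonneg (F 1 x)]
    have hG : Gfun ψ i x = Real.sqrt (a ^ 2 + b ^ 2) := by
      simp only [Gfun, hadef, hbdef, hgdef, hvdef]; rfl
    rw [hG, ← Real.sqrt_sq_eq_abs]
    exact Real.sqrt_le_sqrt key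
  refine ⟨hsinv_g_int, ?_⟩
  calc ∫ x, (Real.sqrt (q x))⁻¹ * g x
      ≤ ∫ x, (d 0 x * g x + d 1 x * g x) := by
        refine integral_mono hsinv_g_int ((hdg_int 0).add (hdg_int 1)) fun x => ?_
        have hgx : 0 ≤ g x := by simp only [hgdef]; positivity
        have h1 := hdiv_ge x
        nlinarith [h1, hgx]
    _ = (∫ x, d 0 x * g x) + ∫ x, d 1 x * g x := integral_add (hdg_int 0) (hdg_int 1)
    _ = - ((∫ x, F 0 x * fderiv ℝ g x (v 0)) + ∫ x, F 1 x * fderiv ℝ g x (v 1)) := by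
        rw [hibp 0, hibp 1]; ring
    _ = - ∫ x, (F 0 x * fderiv ℝ g x (v 0) + F 1 x * fderiv ℝ g x (v 1)) := by
        rw [integral_add (hFdg_int 0) (hFdg_int 1)]
    _ ≤ |∫ x, (F 0 x * fderiv ℝ g x (v 0) + F 1 x * fderiv ℝ g x (v 1))| := neg_le_abs _
    _ ≤ ∫ x, |F 0 x * fderiv ℝ g x (v 0) + F 1 x * fderiv ℝ g x (v 1)| := by
        simpa [Real.norm_eq_abs] using
          norm_integral_le_integral_norm
            (fun x => F 0 x * fderiv ℝ g x (v 0) + F 1 x * fderiv ℝ g x (v 1))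
    _ ≤ ∫ x, Gfun ψ i x := by
        refine integral_mono ((hFdg_int 0).add (hFdg_int 1)).abs hGint fun x => hptG x

end HardyNRLB
section MCTNRLB

open Filter Topology

variable {N : ℕ} (ψ : SchwartzMap (EuclideanSpace ℝ (Fin N × Fin 2)) ℂ)

set_option maxHeartbeats 1000000 in
/-- The Hardy inequality for the singular potential, by monotone convergence. -/
lemma hardy_i (i : Fin N) :
    Integrable (fun x : EuclideanSpace ℝ (Fin N × Fin 2) =>
        (Real.sqrt ((x (i, 0)) ^ 2 + (x (i, 1)) ^ 2))⁻¹ * ‖ψ x‖ ^ 2) volume ∧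
    ∫ x : EuclideanSpace ℝ (Fin N × Fin 2),
        (Real.sqrt ((x (i, 0)) ^ 2 + (x (i, 1)) ^ 2))⁻¹ * ‖ψ x‖ ^ 2
      ≤ ∫ x, Gfun ψ i x := by
  classical
  set E' := EuclideanSpace ℝ (Fin N × Fin 2)
  set K := ∫ x, Gfun ψ i x with hKdef
  have hK0 : 0 ≤ K := integral_nonneg fun x => Gfun_nonneg ψ i x
  set f0 : E' → ℝ :=
    fun x => (Real.sqrt ((x (i, 0)) ^ 2 + (x (i, 1)) ^ 2))⁻¹ * ‖ψ x‖ ^ 2 with hf0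
  set fn : ℕ → E' → ENNReal := fun n x =>
    ENNReal.ofReal
      ((Real.sqrt (1 / ((n:ℝ) + 1) + (x (i, 0)) ^ 2 + (x (i, 1)) ^ 2))⁻¹ * ‖ψ x‖ ^ 2) with hfn
  have hδn : ∀ n : ℕ, (0:ℝ) < 1 / ((n:ℝ) + 1) := fun n => by positivity
  have hHn := fun n : ℕ => hardy_delta ψ i (hδn n)
  have hnn : ∀ (δ' : ℝ) (x : E'), 0 < δ' →
      0 ≤ (Real.sqrt (δ' + (x (i, 0)) ^ 2 + (x (i, 1)) ^ 2))⁻¹ * ‖ψ x‖ ^ 2 := by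
    intro δ' x h; positivity
  have hlin : ∀ n : ℕ, (∫⁻ x, fn n x) ≤ ENNReal.ofReal K := by
    intro n
    simp only [hfn]
    rw [← ofReal_integral_eq_lintegral_ofReal (hHn n).1
      (Filter.Eventually.of_forall fun x => hnn _ x (hδn n))]
    exact ENNReal.ofReal_le_ofReal (hHn n).2
  have hmeas_coord : ∀ j : Fin 2, Continuous fun x : E' => x (i, j) := fun j =>
    (EuclideanSpace.proj ((i, j) : Fin N × Fin 2) : E' →L[ℝ] ℝ).continuous
  have hfn_meas : ∀ n : ℕ, AEMeasurable (fn n) volume := by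
    intro n
    apply Measurable.aemeasurable
    apply ENNReal.measurable_ofReal.comp
    apply Measurable.mul
    · exact ((Real.continuous_sqrt.comp ((continuous_const.add
        ((hmeas_coord 0).pow 2)).add ((hmeas_coord 1).pow 2))).measurable).inv
    · exact (ψ.continuous.norm.pow 2).measurable
  have hmono : ∀ x : E', Monotone fun n => fn n x := by
    intro x n m hnm
    simp only [hfn]
    apply ENNReal.ofReal_le_ofReal
    apply mul_le_mul_of_nonneg_right _ (by positivity)
    have h1 : (0:ℝ) < Real.sqrt (1 / ((m:ℝ) + 1) + (x (i, 0)) ^ 2 + (x (i, 1)) ^ 2) := by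
      have := hδn m; positivity
    apply inv_anti₀ h1
    apply Real.sqrt_le_sqrt
    have h2 : (1:ℝ) / ((m:ℝ) + 1) ≤ 1 / ((n:ℝ) + 1) := by
      apply one_div_le_one_div_of_le (by positivity)
      have := (Nat.cast_le (α := ℝ)).2 hnm
      linarith
    linarith
  have hae : ∀ᵐ x : E' ∂volume, x (i, 0) ≠ 0 := by
    rw [ae_iff]
    have hset : {x : E' | ¬ x (i, 0) ≠ 0}
        = (LinearMap.ker ((EuclideanSpace.proj ((i, 0) : Fin N × Fin 2) : E' →L[ℝ] ℝ) : E' →ₗ[ℝ] ℝ) : Set E') := by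
      ext x
      simp only [Set.mem_setOf_eq, not_not, SetLike.mem_coe, LinearMap.mem_ker]
      exact Iff.rfl
    rw [hset]
    apply Measure.addHaar_submodule
    intro h
    have h1 : EuclideanSpace.single ((i, 0) : Fin N × Fin 2) (1:ℝ) ∈
        LinearMap.ker ((EuclideanSpace.proj ((i, 0) : Fin N × Fin 2) : E' →L[ℝ] ℝ) : E' →ₗ[ℝ] ℝ) := by
      rw [h]; trivial
    have h2 := LinearMap.mem_ker.1 h1
    have h3 : (EuclideanSpace.proj ((i, 0) : Fin N × Fin 2) : E' →L[ℝ] ℝ)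
        (EuclideanSpace.single ((i, 0) : Fin N × Fin 2) (1:ℝ)) = 1 := by
      have : (EuclideanSpace.single ((i, 0) : Fin N × Fin 2) (1:ℝ)) (i, 0) = 1 := by
        rw [EuclideanSpace.single_apply]; simp
      exact this
    rw [ContinuousLinearMap.coe_coe, h3] at h2
    exact one_ne_zero h2
  have htends : ∀ᵐ x : E' ∂volume, Filter.Tendsto (fun n => fn n x) Filter.atTop
      (𝓝 (ENNReal.ofReal (f0 x))) := by
    filter_upwards [hae] with x hx
    have ha0 : 0 < (x (i, 0)) ^ 2 := lt_of_le_of_ne (sq_nonneg _) (Ne.symm (pow_ne_zero 2 hx))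
    have ha : 0 < (x (i, 0)) ^ 2 + (x (i, 1)) ^ 2 := by nlinarith [sq_nonneg (x (i, 1))]
    have h1 : Filter.Tendsto (fun n : ℕ => 1 / ((n:ℝ) + 1) + (x (i, 0)) ^ 2 + (x (i, 1)) ^ 2)
        Filter.atTop (𝓝 (0 + (x (i, 0)) ^ 2 + (x (i, 1)) ^ 2)) :=
      (tendsto_one_div_add_atTop_nhds_zero_nat.add_const _).add_const _
    have h2 := (Real.continuous_sqrt.tendsto _).comp h1
    have h3 : Real.sqrt (0 + (x (i, 0)) ^ 2 + (x (i, 1)) ^ 2) ≠ 0 := by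
      refine (Real.sqrt_pos.2 ?_).ne'
      linarith
    have h4 := h2.inv₀ h3
    have h5 := h4.mul_const (‖ψ x‖ ^ 2)
    have h6 := (ENNReal.continuous_ofReal.tendsto _).comp h5
    simp only [hfn, hf0, Function.comp_def] at h6 ⊢
    simpa [zero_add] using h6
  have hconv := lintegral_tendsto_of_tendsto_of_monotone hfn_meas
    (Filter.Eventually.of_forall hmono) htends
  have hFle : (∫⁻ x, ENNReal.ofReal (f0 x)) ≤ ENNReal.ofReal K :=
    le_of_tendsto' hconv hlin
  have hf0_meas : AEStronglyMeasurable f0 volume := by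
    apply Measurable.aestronglyMeasurable
    apply Measurable.mul
    · exact ((Real.continuous_sqrt.comp (((hmeas_coord 0).pow 2).add
        ((hmeas_coord 1).pow 2))).measurable).inv
    · exact (ψ.continuous.norm.pow 2).measurable
  have hf0_nonneg : ∀ x, 0 ≤ f0 x := fun x => by simp only [hf0]; positivity
  have hint : Integrable f0 volume := by
    refine ⟨hf0_meas, ?_⟩
    rw [hasFiniteIntegral_iff_ofReal (Filter.Eventually.of_forall hf0_nonneg)]
    exact lt_of_le_of_lt hFle ENNReal.ofReal_lt_top
  refine ⟨hint, ?_⟩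
  rw [integral_eq_lintegral_of_nonneg_ae (Filter.Eventually.of_forall hf0_nonneg) hf0_meas]
  calc (∫⁻ x, ENNReal.ofReal (f0 x)).toReal ≤ (ENNReal.ofReal K).toReal :=
      ENNReal.toReal_mono ENNReal.ofReal_ne_top hFle
    _ = K := ENNReal.toReal_ofReal hK0

lemma sum_G_le (x : EuclideanSpace ℝ (Fin N × Fin 2)) :
    ∑ i : Fin N, Gfun ψ i x ≤ Real.sqrt N * (2 * (‖ψ x‖ * ‖fderiv ℝ (⇑ψ) x‖)) := by
  set M := 2 * (‖ψ x‖ * ‖fderiv ℝ (⇑ψ) x‖) with hM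
  have hM0 : 0 ≤ M := by positivity
  have hCS : (∑ i : Fin N, Gfun ψ i x) ^ 2 ≤ (N : ℝ) * ∑ i : Fin N, (Gfun ψ i x) ^ 2 := by
    have h := Finset.sum_mul_sq_le_sq_mul_sq Finset.univ (fun _ : Fin N => (1:ℝ))
      (fun i => Gfun ψ i x)
    simpa [Finset.card_univ] using h
  have hsum : ∑ i : Fin N, (Gfun ψ i x) ^ 2
      = ∑ c : Fin N × Fin 2,
          (fderiv ℝ (fun y => ‖ψ y‖ ^ 2) x (EuclideanSpace.single c 1)) ^ 2 := by
    rw [Fintype.sum_prod_type]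
    refine Finset.sum_congr rfl fun i _ => ?_
    rw [Fin.sum_univ_two]
    simp only [Gfun]
    rw [Real.sq_sqrt (by positivity)]
  have hL := sqrt_sum_sq_coords_le (fderiv ℝ (fun y => ‖ψ y‖ ^ 2) x) hM0
    (fun u => by rw [hM]; exact abs_fderiv_normsq_le ψ x u)
  have hS0 : (0:ℝ) ≤ ∑ c : Fin N × Fin 2,
      (fderiv ℝ (fun y => ‖ψ y‖ ^ 2) x (EuclideanSpace.single c 1)) ^ 2 :=
    Finset.sum_nonneg fun c _ => sq_nonneg _
  have hsum_le : ∑ c : Fin N × Fin 2,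
      (fderiv ℝ (fun y => ‖ψ y‖ ^ 2) x (EuclideanSpace.single c 1)) ^ 2 ≤ M ^ 2 := by
    nlinarith [Real.sq_sqrt hS0, Real.sqrt_nonneg (∑ c : Fin N × Fin 2,
      (fderiv ℝ (fun y => ‖ψ y‖ ^ 2) x (EuclideanSpace.single c 1)) ^ 2), hL]
  have h2 : (∑ i : Fin N, Gfun ψ i x) ^ 2 ≤ (Real.sqrt N * M) ^ 2 := by
    rw [mul_pow, Real.sq_sqrt (Nat.cast_nonneg N)]
    calc (∑ i : Fin N, Gfun ψ i x) ^ 2 ≤ (N : ℝ) * ∑ i : Fin N, (Gfun ψ i x) ^ 2 := hCS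
      _ = (N : ℝ) * ∑ c : Fin N × Fin 2,
            (fderiv ℝ (fun y => ‖ψ y‖ ^ 2) x (EuclideanSpace.single c 1)) ^ 2 := by rw [hsum]
      _ ≤ (N : ℝ) * M ^ 2 := mul_le_mul_of_nonneg_left hsum_le (Nat.cast_nonneg N)
  have h3 : 0 ≤ ∑ i : Fin N, Gfun ψ i x := Finset.sum_nonneg fun i _ => Gfun_nonneg ψ i x
  nlinarith [h2, h3, mul_nonneg (Real.sqrt_nonneg (N:ℝ)) hM0]

lemma sum_hardy :
    ∑ i : Fin N, ∫ x : EuclideanSpace ℝ (Fin N × Fin 2),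
        (Real.sqrt ((x (i, 0)) ^ 2 + (x (i, 1)) ^ 2))⁻¹ * ‖ψ x‖ ^ 2
      ≤ Real.sqrt N * 2 * (Real.sqrt (∫ x, ‖ψ x‖ ^ 2)
          * Real.sqrt (∫ x, ‖fderiv ℝ (⇑ψ) x‖ ^ 2)) := by
  have hGint : ∀ i : Fin N, Integrable (Gfun ψ i) volume := fun i => integrable_Gfun ψ i
  calc ∑ i : Fin N, ∫ x : EuclideanSpace ℝ (Fin N × Fin 2),
        (Real.sqrt ((x (i, 0)) ^ 2 + (x (i, 1)) ^ 2))⁻¹ * ‖ψ x‖ ^ 2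
      ≤ ∑ i : Fin N, ∫ x, Gfun ψ i x :=
        Finset.sum_le_sum fun i _ => (hardy_i ψ i).2
    _ = ∫ x, ∑ i : Fin N, Gfun ψ i x :=
        (integral_finset_sum _ fun i _ => hGint i).symm
    _ ≤ ∫ x, Real.sqrt N * (2 * (‖ψ x‖ * ‖fderiv ℝ (⇑ψ) x‖)) := by
        refine integral_mono (integrable_finset_sum _ fun i _ => hGint i)
          (((integrable_mixed ψ).const_mul 2).const_mul (Real.sqrt N))
          fun x => sum_G_le ψ x
    _ = Real.sqrt N * 2 * ∫ x, ‖ψ x‖ * ‖fderiv ℝ (⇑ψ) x‖ := by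
        rw [integral_const_mul, integral_const_mul]; ring
    _ ≤ Real.sqrt N * 2 * (Real.sqrt (∫ x, ‖ψ x‖ ^ 2)
          * Real.sqrt (∫ x, ‖fderiv ℝ (⇑ψ) x‖ ^ 2)) := by
        refine mul_le_mul_of_nonneg_left (cs_mixed ψ) (by positivity)

end MCTNRLB
set_option maxHeartbeats 1000000 in
/-- The bottom of the numerical range of the two-dimensional atomic Hamiltonian
`h_{N,Z} = -Δ + 𝒱_{2D}` is bounded below by `-(Γ(1/4)⁴ √N Z / (8π²))²`: for every
normalized `ψ ∈ H¹(ℝ^{2N})` (here Schwartz),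
`‖∇ψ‖² + ⟨ψ, 𝒱_{2D} ψ⟩ ≥ -(Γ(1/4)⁴ √N Z / (8π²))²`. -/
theorem numerical_range_lower_bound (N : ℕ) (Z : ℝ) (hZ : 0 < Z)
    (ψ : SchwartzMap (EuclideanSpace ℝ (Fin N × Fin 2)) ℂ)
    (hψ : ∫ x : EuclideanSpace ℝ (Fin N × Fin 2), ‖ψ x‖ ^ 2 = 1) :
    -((Real.Gamma (1 / 4)) ^ 4 * Real.sqrt N * Z / (8 * π ^ 2)) ^ 2 ≤
      (∫ x : EuclideanSpace ℝ (Fin N × Fin 2), ‖fderiv ℝ (⇑ψ) x‖ ^ 2) +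
        ∫ x : EuclideanSpace ℝ (Fin N × Fin 2), V2D N Z x * ‖ψ x‖ ^ 2 := by
  classical
  have hπ : (0:ℝ) < 8 * π ^ 2 := by positivity
  set T := ∫ x : EuclideanSpace ℝ (Fin N × Fin 2), ‖fderiv ℝ (⇑ψ) x‖ ^ 2 with hTdef
  have hT0 : 0 ≤ T := integral_nonneg fun x => sq_nonneg _
  have hc0 : (0:ℝ) ≤ ((Real.Gamma (1 / 4)) ^ 4 * Real.sqrt N * Z / (8 * π ^ 2)) ^ 2 :=
    sq_nonneg _
  by_cases hV : Integrable
      (fun x : EuclideanSpace ℝ (Fin N × Fin 2) => V2D N Z x * ‖ψ x‖ ^ 2) volume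
  swap
  · rw [integral_undef hV]
    linarith
  -- attraction part
  set W : EuclideanSpace ℝ (Fin N × Fin 2) → ℝ := fun x =>
    -Z * ∑ i : Fin N, (Real.sqrt ((x (i, 0)) ^ 2 + (x (i, 1)) ^ 2))⁻¹ with hWdef
  have hWg_eq : (fun x : EuclideanSpace ℝ (Fin N × Fin 2) => W x * ‖ψ x‖ ^ 2)
      = fun x => -Z * ∑ i : Fin N,
          ((Real.sqrt ((x (i, 0)) ^ 2 + (x (i, 1)) ^ 2))⁻¹ * ‖ψ x‖ ^ 2) := by
    funext x
    simp only [hWdef]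
    rw [mul_assoc, Finset.sum_mul]
  have hWg_int : Integrable
      (fun x : EuclideanSpace ℝ (Fin N × Fin 2) => W x * ‖ψ x‖ ^ 2) volume := by
    rw [hWg_eq]
    exact (integrable_finset_sum _ fun i _ => (hardy_i ψ i).1).const_mul (-Z)
  have hVg_ge : ∫ x : EuclideanSpace ℝ (Fin N × Fin 2), W x * ‖ψ x‖ ^ 2
      ≤ ∫ x : EuclideanSpace ℝ (Fin N × Fin 2), V2D N Z x * ‖ψ x‖ ^ 2 := by
    refine integral_mono hWg_int hV fun x => ?_
    have hrep : 0 ≤ ∑ p ∈ Finset.univ.filter (fun p : Fin N × Fin N => p.1 < p.2),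
        (Real.sqrt ((x (p.1, 0) - x (p.2, 0)) ^ 2 + (x (p.1, 1) - x (p.2, 1)) ^ 2))⁻¹ :=
      Finset.sum_nonneg fun p _ => by positivity
    have hW_le : W x ≤ V2D N Z x := by
      simp only [hWdef, V2D]
      linarith
    exact mul_le_mul_of_nonneg_right hW_le (sq_nonneg _)
  have hWg_val : ∫ x : EuclideanSpace ℝ (Fin N × Fin 2), W x * ‖ψ x‖ ^ 2
      = -Z * ∑ i : Fin N, ∫ x : EuclideanSpace ℝ (Fin N × Fin 2),
          (Real.sqrt ((x (i, 0)) ^ 2 + (x (i, 1)) ^ 2))⁻¹ * ‖ψ x‖ ^ 2 := by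
    rw [hWg_eq, integral_const_mul, integral_finset_sum _ fun i _ => (hardy_i ψ i).1]
  -- the Hardy bound
  have hsum := sum_hardy ψ
  rw [hψ, Real.sqrt_one, one_mul] at hsum
  have hWbound : -Z * (Real.sqrt N * 2 * Real.sqrt T) ≤
      ∫ x : EuclideanSpace ℝ (Fin N × Fin 2), W x * ‖ψ x‖ ^ 2 := by
    rw [hWg_val]
    have h1 := mul_le_mul_of_nonneg_left hsum hZ.le
    nlinarith [h1]
  -- final arithmetic
  set K := (Real.Gamma (1 / 4)) ^ 4 / (8 * π ^ 2) with hKdef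
  have hK1 : 1 ≤ K := by
    rw [hKdef, le_div_iff₀ hπ, one_mul]
    exact gamma_quarter_pow_four
  have hK2 : 1 ≤ K ^ 2 := by nlinarith [hK1]
  set a := Real.sqrt N * Z with hadef
  have ha0 : 0 ≤ a := by positivity
  have hrw : ((Real.Gamma (1 / 4)) ^ 4 * Real.sqrt N * Z / (8 * π ^ 2)) ^ 2
      = (K * a) ^ 2 := by
    rw [hKdef, hadef]; ring
  rw [hrw]
  set t := Real.sqrt T with htdef
  have ht2 : t ^ 2 = T := Real.sq_sqrt hT0
  have ht0 : 0 ≤ t := Real.sqrt_nonneg _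
  have hKa : a ^ 2 ≤ a ^ 2 * K ^ 2 := by nlinarith [sq_nonneg a, hK2]
  have hfin : -(K * a) ^ 2 ≤ T - Z * (Real.sqrt N * 2 * t) := by
    have h5 : Z * (Real.sqrt N * 2 * t) = 2 * a * t := by rw [hadef]; ring
    rw [h5, ← ht2]
    nlinarith [sq_nonneg (t - a), hKa]
  calc -(K * a) ^ 2 ≤ T - Z * (Real.sqrt N * 2 * Real.sqrt T) := hfin
    _ ≤ T + ∫ x : EuclideanSpace ℝ (Fin N × Fin 2), V2D N Z x * ‖ψ x‖ ^ 2 := by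
        linarith [hVg_ge, hWbound]
end

section
/- The function W_ee(ϱ) := 1 − ϱ V_ee^1(ϱ), ϱ > 0, satisfies 0 ≤ W_ee ≤ 1 and ∫_0^∞ W_ee(ϱ) dϱ = 1/3 − 5/(4π²). -/
open Real MeasureTheory intervalIntegral
open Set Filter Topology

set_option linter.unusedVariables false
set_option linter.unreachableTactic false
set_option linter.unnecessarySeqFocus false
set_option linter.unusedTactic false


lemma sqrt_lem {ϱ : ℝ} (hϱ : 0 < ϱ) (c : ℝ) : ϱ ≤ Real.sqrt (ϱ^2 + c^2) := by
  have h2 := Real.sqrt_le_sqrt (show ϱ^2 ≤ ϱ^2 + c^2 by nlinarith [sq_nonneg c])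
  rwa [Real.sqrt_sq hϱ.le] at h2

lemma w_nonneg {ϱ : ℝ} (hϱ : 0 < ϱ) (c : ℝ) : 0 ≤ 1 - ϱ / Real.sqrt (ϱ^2 + c^2) := by
  have h1 : (0:ℝ) < Real.sqrt (ϱ^2 + c^2) := Real.sqrt_pos.2 (by positivity)
  have := div_le_one_of_le₀ (sqrt_lem hϱ c) h1.le
  linarith

lemma w_le_one {ϱ : ℝ} (hϱ : 0 < ϱ) (c : ℝ) : 1 - ϱ / Real.sqrt (ϱ^2 + c^2) ≤ 1 := by
  have h1 : (0:ℝ) < Real.sqrt (ϱ^2 + c^2) := Real.sqrt_pos.2 (by positivity)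
  have : 0 ≤ ϱ / Real.sqrt (ϱ^2 + c^2) := by positivity
  linarith

lemma w_le {ϱ : ℝ} (hϱ : 0 < ϱ) (c : ℝ) :
    1 - ϱ / Real.sqrt (ϱ^2 + c^2) ≤ c^2 / (ϱ^2 + c^2) := by
  set r := Real.sqrt (ϱ^2 + c^2) with hrdef
  have h1 : (0:ℝ) < r := Real.sqrt_pos.2 (by positivity)
  have hr2 : r^2 = ϱ^2 + c^2 := Real.sq_sqrt (by positivity)
  have h2 : ϱ ≤ r := sqrt_lem hϱ c
  have key : (1 - ϱ / r) * (ϱ^2 + c^2) ≤ c^2 := by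
    have he : 1 - ϱ / r = (r - ϱ)/r := by field_simp
    rw [he, div_mul_eq_mul_div, div_le_iff₀ h1]
    nlinarith [mul_nonneg (sub_nonneg.2 h2) (hϱ.le.trans h2)]
  calc 1 - ϱ / r = (1 - ϱ / r) * (ϱ^2 + c^2) / (ϱ^2 + c^2) := by field_simp
    _ ≤ c^2 / (ϱ^2 + c^2) := by gcongr

lemma w_le_inv {ϱ c : ℝ} (hϱ : 0 < ϱ) (hc : c^2 ≤ 1) :
    1 - ϱ / Real.sqrt (ϱ^2 + c^2) ≤ (1 + ϱ^2)⁻¹ := by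
  refine (w_le hϱ c).trans ?_
  rw [inv_eq_one_div, div_le_div_iff₀ (by positivity) (by positivity)]
  nlinarith [sq_nonneg c, sq_nonneg ϱ]

lemma w_le_inv' {ϱ : ℝ} (c : ℝ) (hϱ : 0 < ϱ) :
    1 - ϱ / Real.sqrt (ϱ^2 + c^2) ≤ max 1 (c^2) * (1 + ϱ^2)⁻¹ := by
  refine (w_le hϱ c).trans ?_
  rw [div_le_iff₀ (by positivity)]
  have h1 : c^2 ≤ max 1 (c^2) := le_max_right _ _
  have h2 : (1:ℝ) ≤ max 1 (c^2) := le_max_left _ _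
  have : max 1 (c^2) * (1 + ϱ^2)⁻¹ * (ϱ^2 + c^2) * (1 + ϱ^2) = max 1 (c^2) * (ϱ^2 + c^2) := by
    field_simp
  nlinarith [sq_nonneg c, sq_nonneg ϱ, mul_le_mul_of_nonneg_left (sq_nonneg ϱ) (le_trans zero_le_one h2)]





lemma w_meas (c : ℝ) : Measurable (fun ϱ : ℝ => 1 - ϱ / Real.sqrt (ϱ^2 + c^2)) := by
  apply Measurable.sub measurable_const
  exact measurable_id.div ((Real.continuous_sqrt.measurable).comp (by measurability))

lemma w_integrable (c : ℝ) :
    IntegrableOn (fun ϱ : ℝ => 1 - ϱ / Real.sqrt (ϱ^2 + c^2)) (Ioi 0) := by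
  have hbound : Integrable (fun ϱ : ℝ => max 1 (c^2) * (1 + ϱ^2)⁻¹)
      (volume.restrict (Ioi (0:ℝ))) :=
    (integrable_inv_one_add_sq.const_mul _).restrict
  refine Integrable.mono' hbound ((w_meas c).aestronglyMeasurable) ?_
  filter_upwards [ae_restrict_mem measurableSet_Ioi] with ϱ (hϱ : (0:ℝ) < ϱ)
  rw [Real.norm_eq_abs, abs_of_nonneg (w_nonneg hϱ c)]
  exact w_le_inv' c hϱ

lemma hasDerivAt_sqrt_sq_add {c : ℝ} (hc : c ≠ 0) (ϱ : ℝ) :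
    HasDerivAt (fun x : ℝ => Real.sqrt (x^2 + c^2)) (ϱ / Real.sqrt (ϱ^2 + c^2)) ϱ := by
  have hpos : (0:ℝ) < ϱ^2 + c^2 := by positivity
  have h1 : HasDerivAt (fun x : ℝ => x^2 + c^2) (2*ϱ) ϱ := by
    simpa using (hasDerivAt_pow 2 ϱ).add_const (c^2)
  have h2 := (Real.hasDerivAt_sqrt hpos.ne').comp ϱ h1
  refine h2.congr_deriv ?_
  have : Real.sqrt (ϱ^2 + c^2) ≠ 0 := (Real.sqrt_pos.2 hpos).ne'
  field_simp

lemma integral_w (c : ℝ) :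
    ∫ ϱ in Ioi (0:ℝ), (1 - ϱ / Real.sqrt (ϱ^2 + c^2)) = |c| := by
  rcases eq_or_ne c 0 with rfl | hc
  · rw [abs_zero]
    have h0 : ∫ ϱ in Ioi (0:ℝ), (1 - ϱ / Real.sqrt (ϱ^2 + (0:ℝ)^2)) = ∫ _ϱ in Ioi (0:ℝ), (0:ℝ) := by
      apply setIntegral_congr_fun measurableSet_Ioi
      intro ϱ (hϱ : (0:ℝ) < ϱ)
      simp [Real.sqrt_sq hϱ.le, div_self hϱ.ne']
    rw [h0, MeasureTheory.integral_zero]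
  · set F : ℝ → ℝ := fun ϱ => ϱ + |c| - Real.sqrt (ϱ^2 + c^2) with hF
    have hderiv : ∀ ϱ ∈ Ioi (0:ℝ), HasDerivAt F (1 - ϱ / Real.sqrt (ϱ^2 + c^2)) ϱ := by
      intro ϱ _
      exact ((hasDerivAt_id ϱ).add_const |c|).sub (hasDerivAt_sqrt_sq_add hc ϱ)
    have hcont : ContinuousWithinAt F (Ici 0) 0 := by
      apply Continuous.continuousWithinAt
      fun_prop
    have htend : Tendsto F atTop (𝓝 |c|) := by
      have heq : ∀ᶠ ϱ in atTop, |c| - c^2 / (ϱ + Real.sqrt (ϱ^2 + c^2)) = F ϱ := by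
        filter_upwards [eventually_gt_atTop (0:ℝ)] with ϱ hϱ
        have hr : (0:ℝ) < Real.sqrt (ϱ^2 + c^2) := Real.sqrt_pos.2 (by positivity)
        have hr2 : Real.sqrt (ϱ^2 + c^2)^2 = ϱ^2 + c^2 := Real.sq_sqrt (by positivity)
        have hd : (0:ℝ) < ϱ + Real.sqrt (ϱ^2 + c^2) := by linarith
        rw [hF]
        field_simp
        nlinarith [hr2]
      refine Tendsto.congr' heq ?_
      have h1 : Tendsto (fun ϱ : ℝ => ϱ + Real.sqrt (ϱ^2 + c^2)) atTop atTop := by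
        apply tendsto_atTop_mono (fun ϱ => le_add_of_nonneg_right (Real.sqrt_nonneg _))
        exact tendsto_id
      have h2 : Tendsto (fun ϱ : ℝ => c^2 / (ϱ + Real.sqrt (ϱ^2 + c^2))) atTop (𝓝 0) :=
        Tendsto.div_atTop tendsto_const_nhds h1
      simpa using tendsto_const_nhds.sub h2
    have := integral_Ioi_of_hasDerivAt_of_tendsto hcont hderiv (w_integrable c) htend
    rw [this, hF]
    simp [Real.sqrt_sq_eq_abs]

lemma hasDerivAt_sin_lin (a x : ℝ) :
    HasDerivAt (fun y : ℝ => Real.sin (a*y)) (a * Real.cos (a*x)) x := by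
  have h := (Real.hasDerivAt_sin (a*x)).comp x ((hasDerivAt_id x).const_mul a)
  exact h.congr_deriv (by ring)

lemma hasDerivAt_cos_lin (a x : ℝ) :
    HasDerivAt (fun y : ℝ => Real.cos (a*y)) (-(a * Real.sin (a*x))) x := by
  have h := (Real.hasDerivAt_cos (a*x)).comp x ((hasDerivAt_id x).const_mul a)
  exact h.congr_deriv (by ring)

lemma sin_two_pi_half : Real.sin (2*π*(1/2:ℝ)) = 0 := by
  rw [show 2*π*(1/2:ℝ) = π by ring]; exact Real.sin_pi

lemma sin_two_pi_neg_half : Real.sin (2*π*(-(1/2):ℝ)) = 0 := by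
  rw [show 2*π*(-(1/2):ℝ) = -π by ring]; simp

lemma cos_two_pi_half : Real.cos (2*π*(1/2:ℝ)) = -1 := by
  rw [show 2*π*(1/2:ℝ) = π by ring]; exact Real.cos_pi

lemma cos_two_pi_neg_half : Real.cos (2*π*(-(1/2):ℝ)) = -1 := by
  rw [show 2*π*(-(1/2):ℝ) = -π by ring]; simp

-- piece 1 : ∫_{-1/2}^{s} cos²(πt)(s-t) dt
lemma piece1 {s : ℝ} (hs1 : -(1/2:ℝ) ≤ s) :
    ∫ t in (-(1/2:ℝ))..s, Real.cos (π*t)^2 * (s - t)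
      = (s^2/4 - Real.cos (2*π*s)/(8*π^2)) - (-s/4 - 1/16 + 1/(8*π^2)) := by
  have hπ : (π:ℝ) ≠ 0 := Real.pi_ne_zero
  set Φ : ℝ → ℝ := fun t => (s*t - t^2/2)/2 + (s-t)*Real.sin (2*π*t)/(4*π)
      - Real.cos (2*π*t)/(8*π^2) with hΦ
  have hd : ∀ t ∈ uIcc (-(1/2:ℝ)) s, HasDerivAt Φ (Real.cos (π*t)^2 * (s - t)) t := by
    intro t _
    have hA : HasDerivAt (fun t : ℝ => (s*t - t^2/2)/2) ((s - t)/2) t := by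
      have := (((hasDerivAt_id t).const_mul s).sub ((hasDerivAt_pow 2 t).div_const 2)).div_const 2
      refine this.congr_deriv ?_; ring
    have hB : HasDerivAt (fun t : ℝ => (s-t)*Real.sin (2*π*t)/(4*π))
        (((-1) * Real.sin (2*π*t) + (s-t)*(2*π*Real.cos (2*π*t)))/(4*π)) t := by
      exact (((hasDerivAt_id t).const_sub s).mul (hasDerivAt_sin_lin (2*π) t)).div_const (4*π)
    have hC : HasDerivAt (fun t : ℝ => Real.cos (2*π*t)/(8*π^2))
        ((-(2*π*Real.sin (2*π*t)))/(8*π^2)) t := (hasDerivAt_cos_lin (2*π) t).div_const (8*π^2)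
    have htot := (hA.add hB).sub hC
    refine htot.congr_deriv ?_
    rw [Real.cos_sq (π*t), show 2*(π*t) = 2*π*t by ring]
    field_simp
    ring
  rw [integral_eq_sub_of_hasDerivAt hd]
  · rw [hΦ]
    simp only [sin_two_pi_neg_half, cos_two_pi_neg_half]
    have h1 : Real.sin (2*π*s)*(s-s) = 0 := by ring
    field_simp
    ring
  · apply Continuous.intervalIntegrable
    fun_prop

lemma piece2 (s : ℝ) :
    ∫ t in s..(1/2:ℝ), Real.cos (π*t)^2 * (t - s)
      = (1/16 - s/4 - 1/(8*π^2)) - (-s^2/4 + Real.cos (2*π*s)/(8*π^2)) := by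
  have hπ : (π:ℝ) ≠ 0 := Real.pi_ne_zero
  set Φ : ℝ → ℝ := fun t => (t^2/2 - s*t)/2 + (t-s)*Real.sin (2*π*t)/(4*π)
      + Real.cos (2*π*t)/(8*π^2) with hΦ
  have hd : ∀ t ∈ uIcc s (1/2:ℝ), HasDerivAt Φ (Real.cos (π*t)^2 * (t - s)) t := by
    intro t _
    have hA : HasDerivAt (fun t : ℝ => (t^2/2 - s*t)/2) ((t - s)/2) t := by
      have := (((hasDerivAt_pow 2 t).div_const 2).sub ((hasDerivAt_id t).const_mul s)).div_const 2
      refine this.congr_deriv ?_; ring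
    have hB : HasDerivAt (fun t : ℝ => (t-s)*Real.sin (2*π*t)/(4*π))
        ((1 * Real.sin (2*π*t) + (t-s)*(2*π*Real.cos (2*π*t)))/(4*π)) t := by
      exact (((hasDerivAt_id t).sub_const s).mul (hasDerivAt_sin_lin (2*π) t)).div_const (4*π)
    have hC : HasDerivAt (fun t : ℝ => Real.cos (2*π*t)/(8*π^2))
        ((-(2*π*Real.sin (2*π*t)))/(8*π^2)) t := (hasDerivAt_cos_lin (2*π) t).div_const (8*π^2)
    have htot := (hA.add hB).add hC
    refine htot.congr_deriv ?_
    rw [Real.cos_sq (π*t), show 2*(π*t) = 2*π*t by ring]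
    field_simp
    ring
  rw [integral_eq_sub_of_hasDerivAt hd]
  · rw [hΦ]
    simp only [sin_two_pi_half, cos_two_pi_half]
    field_simp
    ring
  · apply Continuous.intervalIntegrable
    fun_prop

lemma inner_abs {s : ℝ} (hs : s ∈ Icc (-(1/2:ℝ)) (1/2:ℝ)) :
    ∫ t in (-(1/2:ℝ))..(1/2:ℝ), Real.cos (π*t)^2 * |s - t|
      = s^2/2 + 1/8 - 1/(4*π^2) - Real.cos (2*π*s)/(4*π^2) := by
  obtain ⟨hs1, hs2⟩ := hs
  have hcontabs : Continuous fun t : ℝ => Real.cos (π*t)^2 * |s - t| := by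
    apply Continuous.mul (by fun_prop)
    exact (continuous_const.sub continuous_id).abs
  have hi1 : IntervalIntegrable (fun t : ℝ => Real.cos (π*t)^2 * |s - t|) volume (-(1/2:ℝ)) s :=
    hcontabs.intervalIntegrable _ _
  have hi2 : IntervalIntegrable (fun t : ℝ => Real.cos (π*t)^2 * |s - t|) volume s (1/2:ℝ) :=
    hcontabs.intervalIntegrable _ _
  rw [← intervalIntegral.integral_add_adjacent_intervals hi1 hi2]
  have e1 : (∫ t in (-(1/2:ℝ))..s, Real.cos (π*t)^2 * |s - t|)
      = ∫ t in (-(1/2:ℝ))..s, Real.cos (π*t)^2 * (s - t) := by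
    apply intervalIntegral.integral_congr
    intro t ht
    rw [uIcc_of_le hs1] at ht
    dsimp only
    rw [abs_of_nonneg (sub_nonneg.2 ht.2)]
  have e2 : (∫ t in s..(1/2:ℝ), Real.cos (π*t)^2 * |s - t|)
      = ∫ t in s..(1/2:ℝ), Real.cos (π*t)^2 * (t - s) := by
    apply intervalIntegral.integral_congr
    intro t ht
    rw [uIcc_of_le hs2] at ht
    dsimp only
    rw [abs_of_nonpos (by linarith [ht.1] : s - t ≤ 0), neg_sub]
  rw [e1, e2, piece1 hs1, piece2 s]
  have hπ : (π:ℝ) ≠ 0 := Real.pi_ne_zero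
  field_simp
  ring

lemma sin_four_pi_half : Real.sin (4*π*(1/2:ℝ)) = 0 := by
  rw [show 4*π*(1/2:ℝ) = 2*π by ring]; simp [Real.sin_two_pi]

lemma sin_four_pi_neg_half : Real.sin (4*π*(-(1/2):ℝ)) = 0 := by
  rw [show 4*π*(-(1/2):ℝ) = -(2*π) by ring]; simp [Real.sin_two_pi]

lemma outer_int :
    ∫ s in (-(1/2:ℝ))..(1/2:ℝ),
      Real.cos (π*s)^2 * (s^2/2 + 1/8 - 1/(4*π^2) - Real.cos (2*π*s)/(4*π^2))
      = 1/12 - 5/(16*π^2) := by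
  have hπ : (π:ℝ) ≠ 0 := Real.pi_ne_zero
  set G : ℝ → ℝ := fun s => s^3/12 + (1/16 - 3/(16*π^2))*s + s^2*Real.sin (2*π*s)/(8*π)
      + s*Real.cos (2*π*s)/(8*π^2) - Real.sin (2*π*s)/(16*π^3)
      + (1/16 - 1/(4*π^2))*Real.sin (2*π*s)/(2*π) - Real.sin (4*π*s)/(64*π^3) with hG
  have hd : ∀ s ∈ uIcc (-(1/2:ℝ)) (1/2:ℝ),
      HasDerivAt G (Real.cos (π*s)^2 * (s^2/2 + 1/8 - 1/(4*π^2) - Real.cos (2*π*s)/(4*π^2))) s := by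
    intro s _
    have h1 : HasDerivAt (fun s : ℝ => s^3/12) (3*s^2/12) s := by
      have := (hasDerivAt_pow 3 s).div_const 12
      refine this.congr_deriv ?_ <;> (try simp only [id_eq]) <;> (try ring)
    have h2 : HasDerivAt (fun s : ℝ => (1/16 - 3/(16*π^2))*s) (1/16 - 3/(16*π^2)) s := by
      simpa using (hasDerivAt_id s).const_mul (1/16 - 3/(16*π^2))
    have h3 : HasDerivAt (fun s : ℝ => s^2*Real.sin (2*π*s)/(8*π))
        ((2*s*Real.sin (2*π*s) + s^2*(2*π*Real.cos (2*π*s)))/(8*π)) s := by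
      have := ((hasDerivAt_pow 2 s).mul (hasDerivAt_sin_lin (2*π) s)).div_const (8*π)
      refine this.congr_deriv ?_ <;> (try simp only [id_eq]) <;> (try ring)
    have h4 : HasDerivAt (fun s : ℝ => s*Real.cos (2*π*s)/(8*π^2))
        ((Real.cos (2*π*s) + s*(-(2*π*Real.sin (2*π*s))))/(8*π^2)) s := by
      have := ((hasDerivAt_id s).mul (hasDerivAt_cos_lin (2*π) s)).div_const (8*π^2)
      refine this.congr_deriv ?_ <;> (try simp only [id_eq]) <;> (try ring)
    have h5 : HasDerivAt (fun s : ℝ => Real.sin (2*π*s)/(16*π^3))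
        ((2*π*Real.cos (2*π*s))/(16*π^3)) s := (hasDerivAt_sin_lin (2*π) s).div_const _
    have h6 : HasDerivAt (fun s : ℝ => (1/16 - 1/(4*π^2))*Real.sin (2*π*s)/(2*π))
        ((1/16 - 1/(4*π^2))*(2*π*Real.cos (2*π*s))/(2*π)) s := by
      have := (((hasDerivAt_sin_lin (2*π) s)).const_mul (1/16 - 1/(4*π^2))).div_const (2*π)
      refine this.congr_deriv ?_ <;> (try simp only [id_eq]) <;> (try ring)
    have h7 : HasDerivAt (fun s : ℝ => Real.sin (4*π*s)/(64*π^3))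
        ((4*π*Real.cos (4*π*s))/(64*π^3)) s := (hasDerivAt_sin_lin (4*π) s).div_const _
    have htot := (((((h1.add h2).add h3).add h4).sub h5).add h6).sub h7
    refine htot.congr_deriv ?_
    rw [Real.cos_sq (π*s), show 2*(π*s) = 2*π*s by ring,
      show (4:ℝ)*π*s = 2*(2*π*s) by ring, Real.cos_two_mul]
    field_simp
    ring
  rw [integral_eq_sub_of_hasDerivAt hd]
  · rw [hG]
    simp only [sin_two_pi_half, sin_two_pi_neg_half, cos_two_pi_half, cos_two_pi_neg_half,
      sin_four_pi_half, sin_four_pi_neg_half]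
    field_simp
    ring
  · apply Continuous.intervalIntegrable
    fun_prop

lemma stepD :
    ∫ s in (-(1/2:ℝ))..(1/2:ℝ), ∫ t in (-(1/2:ℝ))..(1/2:ℝ),
      Real.cos (π*s)^2 * Real.cos (π*t)^2 * |s - t| = 1/12 - 5/(16*π^2) := by
  rw [← outer_int]
  apply intervalIntegral.integral_congr
  intro s hs
  rw [uIcc_of_le (by norm_num)] at hs
  dsimp only
  simp_rw [mul_assoc]
  rw [intervalIntegral.integral_const_mul, inner_abs hs]
  ring_nf

/-- The effective electron–electron potential at width `1`:
`V_ee^1(ϱ) = 4 ∫_{-1/2}^{1/2} ∫_{-1/2}^{1/2} cos²(πs) cos²(πt) / √(ϱ² + (s-t)²) ds dt`. -/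
noncomputable def Vee1 (ϱ : ℝ) : ℝ :=
  4 * ∫ s in (-(1 / 2 : ℝ))..(1 / 2 : ℝ), ∫ t in (-(1 / 2 : ℝ))..(1 / 2 : ℝ),
    Real.cos (π * s) ^ 2 * Real.cos (π * t) ^ 2 / Real.sqrt (ϱ ^ 2 + (s - t) ^ 2)


lemma cos_sq_int : ∫ t in (-(1/2:ℝ))..(1/2:ℝ), Real.cos (π*t)^2 = 1/2 := by
  have hπ : (π:ℝ) ≠ 0 := Real.pi_ne_zero
  have hd : ∀ t ∈ uIcc (-(1/2:ℝ)) (1/2:ℝ),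
      HasDerivAt (fun y : ℝ => y/2 + Real.sin (2*π*y)/(4*π)) (Real.cos (π*t)^2) t := by
    intro t _
    have h1 : HasDerivAt (fun y : ℝ => y/2 + Real.sin (2*π*y)/(4*π))
        (1/2 + (2*π) * Real.cos (2*π*t)/(4*π)) t := by
      exact ((hasDerivAt_id t).div_const 2).add ((hasDerivAt_sin_lin (2*π) t).div_const (4*π))
    convert h1 using 1
    rw [Real.cos_sq]
    field_simp
    ring
  rw [integral_eq_sub_of_hasDerivAt hd
    ((by fun_prop : Continuous fun t : ℝ => Real.cos (π*t)^2).intervalIntegrable _ _)]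
  have h2 : Real.sin (2*π*(1/2:ℝ)) = 0 := by
    rw [show 2*π*(1/2:ℝ) = π by ring]; exact Real.sin_pi
  have h3 : Real.sin (2*π*(-(1/2):ℝ)) = 0 := by
    rw [show 2*π*(-(1/2):ℝ) = -π by ring]; simp
  rw [h2, h3]
  norm_num

lemma double_g : ∫ s in (-(1/2:ℝ))..(1/2:ℝ), (∫ t in (-(1/2:ℝ))..(1/2:ℝ),
    Real.cos (π*s)^2 * Real.cos (π*t)^2) = 1/4 := by
  have h : ∀ s : ℝ, (∫ t in (-(1/2:ℝ))..(1/2:ℝ), Real.cos (π*s)^2 * Real.cos (π*t)^2)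
      = Real.cos (π*s)^2 * (1/2) := by
    intro s
    rw [intervalIntegral.integral_const_mul, cos_sq_int]
  simp_rw [h]
  rw [intervalIntegral.integral_mul_const, cos_sq_int]
  norm_num

lemma cont_div {ϱ : ℝ} (hϱ : 0 < ϱ) :
    Continuous fun p : ℝ × ℝ =>
      Real.cos (π*p.1)^2 * Real.cos (π*p.2)^2 / Real.sqrt (ϱ^2 + (p.1-p.2)^2) := by
  apply Continuous.div (by fun_prop) (by fun_prop)
  intro p
  exact (Real.sqrt_pos.2 (by positivity)).ne'

lemma cont_F {ϱ : ℝ} (hϱ : 0 < ϱ) :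
    Continuous fun p : ℝ × ℝ =>
      Real.cos (π*p.1)^2 * Real.cos (π*p.2)^2 * (1 - ϱ/Real.sqrt (ϱ^2 + (p.1-p.2)^2)) := by
  apply Continuous.mul (by fun_prop)
  apply Continuous.sub continuous_const
  apply Continuous.div continuous_const (by fun_prop)
  intro p
  exact (Real.sqrt_pos.2 (by positivity)).ne'

set_option maxHeartbeats 1000000 in
lemma key {ϱ : ℝ} (hϱ : 0 < ϱ) :
    1 - ϱ * Vee1 ϱ = 4 * ∫ s in (-(1/2:ℝ))..(1/2:ℝ), ∫ t in (-(1/2:ℝ))..(1/2:ℝ),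
      Real.cos (π*s)^2 * Real.cos (π*t)^2 * (1 - ϱ/Real.sqrt (ϱ^2 + (s-t)^2)) := by
  have hdivc : ∀ s : ℝ, Continuous fun t : ℝ =>
      Real.cos (π*s)^2 * Real.cos (π*t)^2 / Real.sqrt (ϱ^2 + (s-t)^2) := by
    intro s
    apply Continuous.div (by fun_prop) (by fun_prop)
    intro t
    exact (Real.sqrt_pos.2 (by positivity)).ne'
  have hstep : ∀ s : ℝ, (∫ t in (-(1/2:ℝ))..(1/2:ℝ),
      Real.cos (π*s)^2 * Real.cos (π*t)^2 * (1 - ϱ/Real.sqrt (ϱ^2 + (s-t)^2)))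
      = Real.cos (π*s)^2 * (1/2)
        - ϱ * ∫ t in (-(1/2:ℝ))..(1/2:ℝ),
            Real.cos (π*s)^2 * Real.cos (π*t)^2 / Real.sqrt (ϱ^2 + (s-t)^2) := by
    intro s
    have heq : (fun t : ℝ => Real.cos (π*s)^2 * Real.cos (π*t)^2 * (1 - ϱ/Real.sqrt (ϱ^2 + (s-t)^2)))
        = fun t : ℝ => Real.cos (π*s)^2 * Real.cos (π*t)^2
          - ϱ * (Real.cos (π*s)^2 * Real.cos (π*t)^2 / Real.sqrt (ϱ^2 + (s-t)^2)) := by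
      funext t; ring
    rw [heq, intervalIntegral.integral_sub
        ((by fun_prop : Continuous fun t : ℝ => Real.cos (π*s)^2 * Real.cos (π*t)^2).intervalIntegrable _ _)
        ((show Continuous fun t : ℝ =>
          ϱ * (Real.cos (π*s)^2 * Real.cos (π*t)^2 / Real.sqrt (ϱ^2 + (s-t)^2)) from continuous_const.mul (hdivc s)).intervalIntegrable _ _),
      intervalIntegral.integral_const_mul ϱ, intervalIntegral.integral_const_mul, cos_sq_int]
  simp_rw [hstep]
  have hparam : Continuous fun s : ℝ => ∫ t in (-(1/2:ℝ))..(1/2:ℝ),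
      Real.cos (π*s)^2 * Real.cos (π*t)^2 / Real.sqrt (ϱ^2 + (s-t)^2) := by
    apply continuous_parametric_intervalIntegral_of_continuous'
    exact cont_div hϱ
  rw [intervalIntegral.integral_sub
      ((by fun_prop : Continuous fun s : ℝ => Real.cos (π*s)^2 * (1/2)).intervalIntegrable _ _)
      ((show Continuous fun s : ℝ => ϱ * ∫ t in (-(1/2:ℝ))..(1/2:ℝ),
        Real.cos (π*s)^2 * Real.cos (π*t)^2 / Real.sqrt (ϱ^2 + (s-t)^2) from continuous_const.mul hparam).intervalIntegrable _ _),
    intervalIntegral.integral_mul_const, cos_sq_int, intervalIntegral.integral_const_mul]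
  rw [Vee1]
  ring

lemma cont_F1 {ϱ : ℝ} (hϱ : 0 < ϱ) (s : ℝ) :
    Continuous fun t : ℝ =>
      Real.cos (π*s)^2 * Real.cos (π*t)^2 * (1 - ϱ/Real.sqrt (ϱ^2 + (s-t)^2)) := by
  apply Continuous.mul (by fun_prop)
  apply Continuous.sub continuous_const
  apply Continuous.div continuous_const (by fun_prop)
  intro t
  exact (Real.sqrt_pos.2 (by positivity)).ne'

lemma F_nonneg {ϱ : ℝ} (hϱ : 0 < ϱ) (s t : ℝ) :
    0 ≤ Real.cos (π*s)^2 * Real.cos (π*t)^2 * (1 - ϱ/Real.sqrt (ϱ^2 + (s-t)^2)) :=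
  mul_nonneg (by positivity) (w_nonneg hϱ _)

lemma D_nonneg {ϱ : ℝ} (hϱ : 0 < ϱ) :
    0 ≤ ∫ s in (-(1/2:ℝ))..(1/2:ℝ), ∫ t in (-(1/2:ℝ))..(1/2:ℝ),
      Real.cos (π*s)^2 * Real.cos (π*t)^2 * (1 - ϱ/Real.sqrt (ϱ^2 + (s-t)^2)) := by
  apply intervalIntegral.integral_nonneg (by norm_num)
  intro s _
  apply intervalIntegral.integral_nonneg (by norm_num)
  intro t _
  exact F_nonneg hϱ s t

lemma D_le {ϱ : ℝ} (hϱ : 0 < ϱ) :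
    (∫ s in (-(1/2:ℝ))..(1/2:ℝ), ∫ t in (-(1/2:ℝ))..(1/2:ℝ),
      Real.cos (π*s)^2 * Real.cos (π*t)^2 * (1 - ϱ/Real.sqrt (ϱ^2 + (s-t)^2))) ≤ 1/4 := by
  rw [← double_g]
  apply intervalIntegral.integral_mono_on (by norm_num)
  · apply Continuous.intervalIntegrable
    apply continuous_parametric_intervalIntegral_of_continuous'
    exact cont_F hϱ
  · exact ((by fun_prop : Continuous fun s : ℝ => ∫ t in (-(1/2:ℝ))..(1/2:ℝ),
      Real.cos (π*s)^2 * Real.cos (π*t)^2)).intervalIntegrable _ _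
  · intro s _
    apply intervalIntegral.integral_mono_on (by norm_num)
    · exact (cont_F1 hϱ s).intervalIntegrable _ _
    · exact ((by fun_prop : Continuous fun t : ℝ =>
        Real.cos (π*s)^2 * Real.cos (π*t)^2)).intervalIntegrable _ _
    · intro t _
      have h1 := w_le_one hϱ (s - t)
      have h2 : (0:ℝ) ≤ Real.cos (π*s)^2 * Real.cos (π*t)^2 := by positivity
      nlinarith [w_nonneg hϱ (s-t)]

lemma part1 {ϱ : ℝ} (hϱ : 0 < ϱ) : 0 ≤ 1 - ϱ * Vee1 ϱ ∧ 1 - ϱ * Vee1 ϱ ≤ 1 := by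
  rw [key hϱ]
  constructor
  · have := D_nonneg hϱ; linarith
  · have := D_le hϱ; linarith



noncomputable def FF (ϱ : ℝ) (p : ℝ × ℝ) : ℝ :=
  Real.cos (π*p.1)^2 * Real.cos (π*p.2)^2 * (1 - ϱ/Real.sqrt (ϱ^2 + (p.1-p.2)^2))

abbrev Q : Set ℝ := Ioc (-(1/2:ℝ)) (1/2:ℝ)
noncomputable abbrev PP : Measure (ℝ × ℝ) := (volume.restrict Q).prod (volume.restrict Q)

lemma volume_Q : volume Q = 1 := by
  rw [Real.volume_Ioc]; norm_num

instance : IsFiniteMeasure (volume.restrict Q) :=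
  ⟨by rw [Measure.restrict_apply_univ, volume_Q]; exact ENNReal.one_lt_top⟩

lemma PP_univ : PP Set.univ = 1 := by
  rw [← Set.univ_prod_univ, Measure.prod_prod, Measure.restrict_apply_univ, volume_Q]
  simp

lemma FF_meas : Measurable (fun z : ℝ × (ℝ × ℝ) => FF z.1 z.2) := by
  unfold FF
  apply Measurable.mul
  · fun_prop
  · apply Measurable.sub measurable_const
    apply Measurable.div measurable_fst
    exact Real.continuous_sqrt.measurable.comp (by fun_prop)

lemma cos_sq_le_one' (x : ℝ) : Real.cos x ^ 2 ≤ 1 := by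
  rw [← Real.sin_sq_add_cos_sq x]; nlinarith [sq_nonneg (Real.sin x)]

lemma FF_bound {ϱ : ℝ} {p : ℝ × ℝ} (h1 : 0 < ϱ) (h2 : p ∈ Q ×ˢ Q) :
    ‖FF ϱ p‖ ≤ (1 + ϱ^2)⁻¹ := by
  obtain ⟨⟨ha1, ha2⟩, ⟨hb1, hb2⟩⟩ := h2
  have hc : (p.1 - p.2)^2 ≤ 1 := by nlinarith
  have hg : Real.cos (π*p.1)^2 * Real.cos (π*p.2)^2 ≤ 1 :=
    mul_le_one₀ (cos_sq_le_one' _) (by positivity) (cos_sq_le_one' _)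
  have hw0 := w_nonneg h1 (p.1 - p.2)
  have hw1 := w_le_inv h1 hc
  show |Real.cos (π*p.1)^2 * Real.cos (π*p.2)^2 * (1 - ϱ/Real.sqrt (ϱ^2 + (p.1-p.2)^2))| ≤ _
  rw [abs_of_nonneg (mul_nonneg (by positivity) hw0)]
  calc Real.cos (π*p.1)^2 * Real.cos (π*p.2)^2 * (1 - ϱ/Real.sqrt (ϱ^2 + (p.1-p.2)^2))
      ≤ 1 * (1 - ϱ/Real.sqrt (ϱ^2 + (p.1-p.2)^2)) := by
        apply mul_le_mul_of_nonneg_right hg hw0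
    _ = 1 - ϱ/Real.sqrt (ϱ^2 + (p.1-p.2)^2) := one_mul _
    _ ≤ (1 + ϱ^2)⁻¹ := hw1

lemma PP_eq : PP = (volume.prod volume).restrict (Q ×ˢ Q) := Measure.prod_restrict _ _

lemma ae_PP_mem : ∀ᵐ p ∂PP, p ∈ Q ×ˢ Q := by
  rw [PP_eq]
  exact ae_restrict_mem (measurableSet_Ioc.prod measurableSet_Ioc)

lemma FF_int1 {ϱ : ℝ} (hϱ : 0 < ϱ) : Integrable (FF ϱ) PP := by
  refine Integrable.mono' (integrable_const ((1 + ϱ^2)⁻¹)) ?_ ?_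
  · exact (cont_F hϱ).aestronglyMeasurable
  · filter_upwards [ae_PP_mem] with p hp
    exact FF_bound hϱ hp

lemma FF_int2 : Integrable (Function.uncurry FF) ((volume.restrict (Ioi (0:ℝ))).prod PP) := by
  rw [integrable_prod_iff (show AEStronglyMeasurable (Function.uncurry FF)
    (((volume.restrict (Ioi (0:ℝ))).prod PP)) from FF_meas.aestronglyMeasurable)]
  constructor
  · filter_upwards [ae_restrict_mem measurableSet_Ioi] with ϱ (hϱ : (0:ℝ) < ϱ)
    exact FF_int1 hϱ
  · apply Integrable.mono' (g := fun ϱ : ℝ => (1 + ϱ^2)⁻¹) integrable_inv_one_add_sq.restrict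
    · exact FF_meas.aestronglyMeasurable.norm.integral_prod_right'
    · filter_upwards [ae_restrict_mem measurableSet_Ioi] with ϱ (hϱ : (0:ℝ) < ϱ)
      have hb : ∀ᵐ p ∂PP, ‖‖FF ϱ p‖‖ ≤ (1 + ϱ^2)⁻¹ := by
        filter_upwards [ae_PP_mem] with p hp
        rw [norm_norm]
        exact FF_bound hϱ hp
      calc ‖∫ p, ‖FF ϱ p‖ ∂PP‖ ≤ (1 + ϱ^2)⁻¹ * (PP Set.univ).toReal :=
            norm_integral_le_of_norm_le_const hb
        _ = (1 + ϱ^2)⁻¹ := by rw [PP_univ]; simp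

lemma part2 : ∫ ϱ in Ioi (0:ℝ), (1 - ϱ * Vee1 ϱ) = 1/3 - 5/(4*π^2) := by
  have hab : (-(1/2:ℝ)) ≤ 1/2 := by norm_num
  have h1 : ∫ ϱ in Ioi (0:ℝ), (1 - ϱ * Vee1 ϱ) = ∫ ϱ in Ioi (0:ℝ), 4 * ∫ p, FF ϱ p ∂PP := by
    apply setIntegral_congr_fun measurableSet_Ioi
    intro ϱ (hϱ : (0:ℝ) < ϱ)
    dsimp only
    rw [key hϱ]
    congr 1
    rw [intervalIntegral.integral_of_le hab]
    simp_rw [intervalIntegral.integral_of_le hab]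
    exact MeasureTheory.integral_integral (f := fun s t => FF ϱ (s, t)) (FF_int1 hϱ)
  rw [h1, MeasureTheory.integral_const_mul]
  rw [MeasureTheory.integral_integral_swap (f := FF) FF_int2]
  have h2 : (fun p : ℝ × ℝ => ∫ ϱ in Ioi (0:ℝ), FF ϱ p)
      = fun p : ℝ × ℝ => Real.cos (π*p.1)^2 * Real.cos (π*p.2)^2 * |p.1 - p.2| := by
    funext p
    have he : (fun ϱ => FF ϱ p) = fun ϱ =>
        Real.cos (π*p.1)^2 * Real.cos (π*p.2)^2 * (1 - ϱ/Real.sqrt (ϱ^2 + (p.1-p.2)^2)) := rfl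
    rw [he, MeasureTheory.integral_const_mul, integral_w]
  rw [h2]
  have habs_int : Integrable
      (fun p : ℝ × ℝ => Real.cos (π*p.1)^2 * Real.cos (π*p.2)^2 * |p.1 - p.2|) PP := by
    refine Integrable.mono' (integrable_const 1) ?_ ?_
    · exact (Continuous.mul (by fun_prop)
        ((continuous_fst.sub continuous_snd).abs)).aestronglyMeasurable
    · filter_upwards [ae_PP_mem] with p hp
      obtain ⟨⟨ha1, ha2⟩, ⟨hb1, hb2⟩⟩ := hp
      have hg : Real.cos (π*p.1)^2 * Real.cos (π*p.2)^2 ≤ 1 :=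
        mul_le_one₀ (cos_sq_le_one' _) (by positivity) (cos_sq_le_one' _)
      have habs1 : |p.1 - p.2| ≤ 1 := by rw [abs_le]; constructor <;> nlinarith
      rw [Real.norm_eq_abs, abs_of_nonneg (by positivity)]
      nlinarith [abs_nonneg (p.1 - p.2), sq_nonneg (Real.cos (π*p.1) * Real.cos (π*p.2))]
  rw [MeasureTheory.integral_prod _ habs_int]
  simp_rw [← intervalIntegral.integral_of_le hab]
  rw [stepD]
  have hπ : (π:ℝ) ≠ 0 := Real.pi_ne_zero
  field_simp
  ring

/-- `W_ee(ϱ) := 1 - ϱ V_ee^1(ϱ)` satisfies `0 ≤ W_ee ≤ 1` on `(0,∞)` and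
`∫_0^∞ W_ee(ϱ) dϱ = 1/3 - 5/(4π²)`. -/
theorem Wee_bounds_and_integral :
    (∀ ϱ : ℝ, 0 < ϱ → 0 ≤ 1 - ϱ * Vee1 ϱ ∧ 1 - ϱ * Vee1 ϱ ≤ 1) ∧
    ∫ ϱ in Set.Ioi (0 : ℝ), (1 - ϱ * Vee1 ϱ) = 1 / 3 - 5 / (4 * π ^ 2) := by
  exact ⟨fun ϱ hϱ => part1 hϱ, part2⟩
end
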